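/- The derivative of the curve d1(d3) = 1 - exp((√d3-√(d3-2))²/4)/(d3-√(d3(d3-2))) at d3 = 2 (one-sided, from the right) equals -√e/8. -/

import Mathlib

open Real Filter Set Topology

/-- auxiliary function `g` -/
noncomputable def gaux (t : ℝ) : ℝ := 1 - Real.exp ((1 + t) / 2) / (2 + t)

/-- standard limit `(e^u - 1 - u)/u² → 1/2`. -/
lemma limA : Tendsto (fun u : ℝ => (Real.exp u - 1 - u) / u ^ 2) (𝓝[≠] (0:ℝ)) (𝓝 (1/2)) := by
  have hexp : Tendsto (fun u : ℝ => (Real.exp u - 1) / u) (𝓝[≠] (0:ℝ)) (𝓝 1) := by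
    have h := hasDerivAt_iff_tendsto_slope.mp (Real.hasDerivAt_exp 0)
    rw [Real.exp_zero] at h
    refine h.congr fun u => ?_
    simp [slope_def_field]
  have hdiv : Tendsto (fun u : ℝ => (Real.exp u - 1) / (2 * u)) (𝓝[≠] (0:ℝ)) (𝓝 (1/2)) := by
    have := hexp.div_const 2
    refine this.congr (fun u => ?_)
    rw [div_div]
    ring_nf
  refine HasDerivAt.lhopital_zero_nhdsNE (f' := fun u => Real.exp u - 1)
    (g' := fun u => 2 * u) ?_ ?_ ?_ ?_ ?_ hdiv
  · filter_upwards with u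
    have h : HasDerivAt (fun u : ℝ => Real.exp u - 1 - u) (Real.exp u - 1) u :=
      ((Real.hasDerivAt_exp u).sub_const 1).sub (hasDerivAt_id' u)
    exact h
  · filter_upwards with u
    simpa using (hasDerivAt_pow 2 u)
  · filter_upwards [self_mem_nhdsWithin] with u hu
    simpa using hu
  · have : ContinuousAt (fun u : ℝ => Real.exp u - 1 - u) 0 := by fun_prop
    have h := this.tendsto.mono_left (nhdsWithin_le_nhds (s := {(0:ℝ)}ᶜ))
    simpa using h
  · have : ContinuousAt (fun u : ℝ => u ^ 2) (0:ℝ) := by fun_prop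
    have h := this.tendsto.mono_left (nhdsWithin_le_nhds (s := {(0:ℝ)}ᶜ))
    simpa using h

/-- limit of `(g t - g 0)/t²` as `t → 0`, `t ≠ 0`. -/
lemma limB : Tendsto (fun t : ℝ => (gaux t - gaux 0) / t ^ 2) (𝓝[≠] (0:ℝ))
    (𝓝 (-Real.exp (1/2) / 16)) := by
  have hcomp : Tendsto (fun t : ℝ => (Real.exp (t/2) - 1 - t/2) / (t/2) ^ 2) (𝓝[≠] (0:ℝ))
      (𝓝 (1/2)) := by
    refine limA.comp ?_
    rw [tendsto_nhdsWithin_iff]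
    constructor
    · have : Tendsto (fun t : ℝ => t / 2) (𝓝 (0:ℝ)) (𝓝 0) := by
        simpa using (tendsto_id (x := 𝓝 (0:ℝ))).div_const 2
      exact this.mono_left nhdsWithin_le_nhds
    · filter_upwards [self_mem_nhdsWithin] with t ht
      simp only [mem_compl_iff, mem_singleton_iff] at ht ⊢
      intro h; exact ht (by linarith [div_eq_zero_iff.mp h])
  have hcont : Tendsto (fun t : ℝ => -Real.exp (1/2) / (8 * (2 + t))) (𝓝[≠] (0:ℝ))
      (𝓝 (-Real.exp (1/2) / 16)) := by
    have : ContinuousAt (fun t : ℝ => -Real.exp (1/2) / (8 * (2 + t))) 0 := by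
      apply ContinuousAt.div
      · fun_prop
      · fun_prop
      · norm_num
    have h := this.tendsto.mono_left (nhdsWithin_le_nhds (s := {(0:ℝ)}ᶜ))
    convert h using 2
    norm_num
  have hmul := hcont.mul hcomp
  have : -Real.exp (1/2) / 16 * (1/2) * 2 = -Real.exp (1/2) / 16 := by ring
  refine Tendsto.congr' ?_ (by simpa [this] using hmul.mul_const 2)
  filter_upwards [self_mem_nhdsWithin,
    eventually_nhdsWithin_of_eventually_nhds (eventually_abs_sub_lt (0:ℝ) one_pos)] with t ht h1
  simp only [mem_compl_iff, mem_singleton_iff] at ht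
  have h2t : 2 + t ≠ 0 := by
    rw [sub_zero] at h1
    have := abs_lt.mp h1
    nlinarith [this.1]
  have hexp : Real.exp ((1 + t)/2) = Real.exp (1/2) * Real.exp (t/2) := by
    rw [← Real.exp_add]; ring_nf
  simp only [gaux, hexp]
  field_simp
  ring

theorem stmt_16 :
    HasDerivWithinAt
      (fun d3 : ℝ =>
        1 - Real.exp ((Real.sqrt d3 - Real.sqrt (d3 - 2)) ^ 2 / 4) /
            (d3 - Real.sqrt (d3 * (d3 - 2))))
      (-(Real.sqrt (Real.exp 1)) / 8) (Set.Ici (2 : ℝ)) 2 := by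
  rw [hasDerivWithinAt_iff_tendsto_slope, Set.Ici_sdiff_left]
  set f : ℝ → ℝ := fun d3 =>
    1 - Real.exp ((Real.sqrt d3 - Real.sqrt (d3 - 2)) ^ 2 / 4) /
      (d3 - Real.sqrt (d3 * (d3 - 2))) with hf
  set sf : ℝ → ℝ := fun x => x - 2 - Real.sqrt (x * (x - 2)) with hsf
  -- s x < 0 for x > 2
  have hsneg : ∀ x : ℝ, 2 < x → sf x < 0 := by
    intro x hx
    have hx2' : (0:ℝ) ≤ x - 2 := by linarith
    have : x - 2 < Real.sqrt (x * (x - 2)) := by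
      rw [Real.lt_sqrt hx2']
      nlinarith
    simp only [hsf]; linarith
  -- tendsto of sf into 𝓝[≠] 0
  have hT1 : Tendsto sf (𝓝[Set.Ioi (2:ℝ)] 2) (𝓝[≠] (0:ℝ)) := by
    rw [tendsto_nhdsWithin_iff]
    constructor
    · have hc : ContinuousAt sf 2 := by
        apply ContinuousAt.sub
        · fun_prop
        · exact (Real.continuous_sqrt.comp (by fun_prop)).continuousAt
      have h := hc.tendsto.mono_left (nhdsWithin_le_nhds (s := Set.Ioi (2:ℝ)))
      have h2 : sf 2 = 0 := by simp [hsf]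
      rwa [h2] at h
    · filter_upwards [self_mem_nhdsWithin] with x hx
      exact (hsneg x hx).ne
  -- tendsto of (√x - √(x-2))^2 to 2
  have hT2 : Tendsto (fun x : ℝ => (Real.sqrt x - Real.sqrt (x - 2)) ^ 2)
      (𝓝[Set.Ioi (2:ℝ)] 2) (𝓝 2) := by
    have hc : ContinuousAt (fun x : ℝ => (Real.sqrt x - Real.sqrt (x - 2)) ^ 2) 2 := by
      apply ContinuousAt.pow
      exact (Real.continuous_sqrt.continuousAt).sub
        (Real.continuous_sqrt.comp (by fun_prop)).continuousAt
    have h := hc.tendsto.mono_left (nhdsWithin_le_nhds (s := Set.Ioi (2:ℝ)))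
    have h2 : (Real.sqrt 2 - Real.sqrt (2 - 2)) ^ 2 = 2 := by
      norm_num [Real.sq_sqrt]
    rwa [h2] at h
  have hmain := (limB.comp hT1).mul hT2
  have hval : -Real.exp (1/2) / 16 * 2 = -(Real.sqrt (Real.exp 1)) / 8 := by
    rw [← Real.exp_half]; ring
  rw [hval] at hmain
  refine Tendsto.congr' ?_ hmain
  filter_upwards [self_mem_nhdsWithin] with x hx
  have hx2 : (2:ℝ) < x := hx
  have h0x : (0:ℝ) ≤ x := by linarith
  have hx2' : (0:ℝ) ≤ x - 2 := by linarith
  have hp : (0:ℝ) ≤ x * (x - 2) := mul_nonneg h0x hx2'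
  have e1 : Real.sqrt x ^ 2 = x := Real.sq_sqrt h0x
  have e2 : Real.sqrt (x - 2) ^ 2 = x - 2 := Real.sq_sqrt hx2'
  have e3 : Real.sqrt (x * (x - 2)) = Real.sqrt x * Real.sqrt (x - 2) :=
    Real.sqrt_mul h0x _
  have hsx : sf x < 0 := hsneg x hx2
  have hsxne : sf x ≠ 0 := hsx.ne
  have hxne : x - 2 ≠ 0 := by linarith
  -- f x = gaux (sf x)
  have hfx : f x = gaux (sf x) := by
    have harg : (Real.sqrt x - Real.sqrt (x - 2)) ^ 2 / 4 = (1 + sf x) / 2 := by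
      simp only [hsf, e3]
      linear_combination e1 / 4 + e2 / 4
    have hden : x - Real.sqrt (x * (x - 2)) = 2 + sf x := by
      simp only [hsf]; ring
    simp only [hf, gaux, harg, hden]
  -- f 2 = gaux 0
  have hf2 : f 2 = gaux 0 := by
    simp only [hf, gaux]
    norm_num [Real.sq_sqrt]
  -- key identity (sf x)^2 = (x-2) * (√x - √(x-2))^2
  have hkey : (sf x) ^ 2 = (x - 2) * (Real.sqrt x - Real.sqrt (x - 2)) ^ 2 := by
    simp only [hsf, e3]
    linear_combination ((Real.sqrt (x-2))^2 - (x-2)) * e1 + 2 * e2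
  show _ = slope f 2 x
  simp only [Function.comp_apply]
  rw [slope_def_field, hfx, hf2]
  have h2 : (Real.sqrt x - Real.sqrt (x-2)) ^ 2 = sf x ^ 2 / (x - 2) := by
    rw [hkey]; field_simp
  rw [h2]
  field_simp
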